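/- Let n ≥ 2 be an integer and s ∈ (0,1). There exists a constant C = C(n,s) > 0 such that for every 𝔟 ∈ [0,1], every y, ξ ∈ ℝ^n_+ and every z > 0, one has Γ_s((y,z),ξ) ≤ C · y_n^𝔟 · ξ_n^𝔟 · z^{2s} · (|y−ξ|² + z²)^{−(n+2s+2𝔟)/2}. -/

import Mathlib

open MeasureTheory Real Set

/-- The last coordinate `y_n` of a point `y ∈ ℝ^n`. -/
noncomputable def lastCoord {n : ℕ} (y : EuclideanSpace ℝ (Fin n)) : ℝ :=
  if h : 0 < n then y ⟨n - 1, Nat.sub_lt h one_pos⟩ else 0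

/-- The kernel `Γ_s((y,z),ξ)`. -/
noncomputable def GammaKer (n : ℕ) (s : ℝ) (y : EuclideanSpace ℝ (Fin n)) (z : ℝ)
    (ξ : EuclideanSpace ℝ (Fin n)) : ℝ :=
  z ^ (2 * s) * (‖y - ξ‖ ^ 2 + z ^ 2) ^ (-((n : ℝ) + 2 * s) / 2) *
    (1 - (1 + 4 * lastCoord y * lastCoord ξ / (‖y - ξ‖ ^ 2 + z ^ 2)) ^ (-((n : ℝ) + 2 * s) / 2))

lemma aux_min_le_rpow {x b : ℝ} (hx : 0 < x) (hb0 : 0 ≤ b) (hb1 : b ≤ 1) :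
    min 1 x ≤ x ^ b := by
  rcases le_total x 1 with h | h
  · calc min 1 x ≤ x := min_le_right _ _
    _ = x ^ (1:ℝ) := (Real.rpow_one x).symm
    _ ≤ x ^ b := Real.rpow_le_rpow_of_exponent_ge hx h hb1
  · calc min 1 x ≤ 1 := min_le_left _ _
    _ ≤ x ^ b := Real.one_le_rpow h hb0

lemma aux_one_sub_le {t p : ℝ} (ht : 0 ≤ t) (hp : 1 ≤ p) :
    1 - (1 + t) ^ (-p) ≤ min 1 (p * t) := by
  have h1t : (0:ℝ) < 1 + t := by linarith
  refine le_min ?_ ?_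
  · have : (0:ℝ) ≤ (1 + t) ^ (-p) := Real.rpow_nonneg h1t.le _
    linarith
  · -- (1+t)^(-p) ≥ 1 - p t via Bernoulli with s = -t/(1+t)
    have hs : -1 ≤ -(t / (1 + t)) := by
      rw [neg_le_neg_iff]
      rw [div_le_one h1t]; linarith
    have hB := one_add_mul_self_le_rpow_one_add hs hp
    have heq : 1 + -(t / (1 + t)) = (1 + t)⁻¹ := by
      field_simp
      ring
    rw [heq] at hB
    rw [Real.inv_rpow h1t.le, ← Real.rpow_neg h1t.le] at hB
    have h2 : 1 - p * (t / (1 + t)) ≤ (1 + t) ^ (-p) := by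
      rw [mul_neg] at hB; linarith
    have h3 : p * (t / (1 + t)) ≤ p * t := by
      apply mul_le_mul_of_nonneg_left _ (by linarith)
      rw [div_le_iff₀ h1t]
      nlinarith
    linarith

theorem stmt3 (n : ℕ) (hn : 2 ≤ n) (s : ℝ) (hs0 : 0 < s) (hs1 : s < 1) :
    ∃ C > (0 : ℝ), ∀ b ∈ Set.Icc (0 : ℝ) 1, ∀ y ξ : EuclideanSpace ℝ (Fin n),
      0 < lastCoord y → 0 < lastCoord ξ → ∀ z : ℝ, 0 < z →
        GammaKer n s y z ξ ≤
          C * lastCoord y ^ b * lastCoord ξ ^ b * z ^ (2 * s) *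
            (‖y - ξ‖ ^ 2 + z ^ 2) ^ (-((n : ℝ) + 2 * s + 2 * b) / 2) := by
  set p : ℝ := ((n : ℝ) + 2 * s) / 2 with hp_def
  have hn2 : (2:ℝ) ≤ (n:ℝ) := by exact_mod_cast hn
  have hp1 : 1 ≤ p := by rw [hp_def]; linarith
  refine ⟨4 * p, by linarith, ?_⟩
  rintro b ⟨hb0, hb1⟩ y ξ hy hξ z hz
  set A := lastCoord y
  set B := lastCoord ξ
  set D : ℝ := ‖y - ξ‖ ^ 2 + z ^ 2 with hD_def
  have hD : 0 < D := by positivity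
  set t : ℝ := 4 * A * B / D with ht_def
  have ht : 0 < t := by positivity
  have hzs : (0:ℝ) ≤ z ^ (2 * s) := Real.rpow_nonneg hz.le _
  have hDp : (0:ℝ) ≤ D ^ (-((n : ℝ) + 2 * s) / 2) := Real.rpow_nonneg hD.le _
  have key : 1 - (1 + t) ^ (-((n : ℝ) + 2 * s) / 2) ≤ 4 * p * (A ^ b * B ^ b * D ^ (-b)) := by
    have hneg : -((n : ℝ) + 2 * s) / 2 = -p := by rw [hp_def]; ring
    rw [hneg]
    calc 1 - (1 + t) ^ (-p) ≤ min 1 (p * t) := aux_one_sub_le ht.le hp1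
      _ ≤ (p * t) ^ b := aux_min_le_rpow (by positivity) hb0 hb1
      _ = (4 * p) ^ b * (A * B / D) ^ b := by
          rw [← Real.mul_rpow (by linarith) (by positivity)]
          congr 1
          rw [ht_def]; ring
      _ ≤ 4 * p * (A * B / D) ^ b := by
          refine mul_le_mul_of_nonneg_right ?_ (by positivity)
          calc (4 * p) ^ b ≤ (4 * p) ^ (1:ℝ) :=
              Real.rpow_le_rpow_of_exponent_le (by linarith) hb1
            _ = 4 * p := Real.rpow_one _
      _ = 4 * p * (A ^ b * B ^ b * D ^ (-b)) := by
          rw [Real.div_rpow (by positivity) hD.le, Real.mul_rpow hy.le hξ.le,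
            Real.rpow_neg hD.le, div_eq_mul_inv]
  have hfinal : GammaKer n s y z ξ ≤
      z ^ (2 * s) * D ^ (-((n : ℝ) + 2 * s) / 2) * (4 * p * (A ^ b * B ^ b * D ^ (-b))) := by
    unfold GammaKer
    exact mul_le_mul_of_nonneg_left key (by positivity)
  refine hfinal.trans (le_of_eq ?_)
  rw [show -((n : ℝ) + 2 * s + 2 * b) / 2 = -((n : ℝ) + 2 * s) / 2 + (-b) by ring,
    Real.rpow_add hD]
  ring
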